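/- Let p be a prime and t ≥ 1, K ≥ 1 integers. Then Φ(K,K,p^t) = p^{t−1}; that is, the maximum possible minimum Lee distance of a rank-K linear code of length K over ℤ_{p^t} equals p^{t−1}. -/

import Mathlib

/-- Lee weight of an element of `ZMod q`. -/
noncomputable def leeWt {q : ℕ} (a : ZMod q) : ℕ := min (ZMod.val a) (q - ZMod.val a)

/-- Lee weight of a vector over `ZMod q`. -/
noncomputable def leeWtVec {q n : ℕ} (x : Fin n → ZMod q) : ℕ := ∑ i, leeWt (x i)

/-- Minimum Lee distance (= minimum Lee weight of a nonzero codeword) of a linear code. -/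
noncomputable def minLee {q n : ℕ} (C : Submodule (ZMod q) (Fin n → ZMod q)) : ℕ :=
  sInf {w | ∃ x ∈ C, x ≠ 0 ∧ leeWtVec x = w}

/-- Minimum Hamming distance (= minimum Hamming weight of a nonzero codeword). -/
noncomputable def minHam {q n : ℕ} (C : Submodule (ZMod q) (Fin n → ZMod q)) : ℕ :=
  sInf {w | ∃ x ∈ C, x ≠ 0 ∧ hammingNorm x = w}

/-- Average nonzero Lee weight of `ZMod q`. -/
noncomputable def mu (q : ℕ) : ℚ :=
  if Even q then (q : ℚ)^2 / (4 * ((q : ℚ) - 1)) else ((q : ℚ) + 1) / 4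

/-- `Phi n k p`: the maximum minimum Lee distance over `k`-dimensional linear codes
of length `n` over `ZMod p`. -/
noncomputable def Phi (n k p : ℕ) : ℕ :=
  sSup {d | ∃ C : Submodule (ZMod p) (Fin n → ZMod p),
    Module.finrank (ZMod p) ↥C = k ∧ minLee C = d}

/-- Rank of a linear code over `ZMod q`: minimal number of generators. -/
noncomputable def codeRank {q n : ℕ} (C : Submodule (ZMod q) (Fin n → ZMod q)) : ℕ :=
  sInf {m | ∃ s : Finset (Fin n → ZMod q), s.card = m ∧
    Submodule.span (ZMod q) (↑s : Set (Fin n → ZMod q)) = C}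

/-- `PhiR n K q`: the maximum minimum Lee distance over rank-`K` linear codes of
length `n` over `ZMod q`. -/
noncomputable def PhiR (n K q : ℕ) : ℕ :=
  sSup {d | ∃ C : Submodule (ZMod q) (Fin n → ZMod q), codeRank C = K ∧ minLee C = d}

open Submodule

section Aux

/-- If the image of `s` spans the quotient by `N`, then `span s ⊔ N = ⊤`. -/
private lemma span_sup_eq_top_of_quot {R M : Type*} [Ring R] [AddCommGroup M] [Module R M]
    (N : Submodule R M) (s : Set M)
    (h : span R (N.mkQ '' s) = ⊤) : span R s ⊔ N = ⊤ := by
  rw [eq_top_iff]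
  intro m _
  have hm : N.mkQ m ∈ span R (N.mkQ '' s) := by rw [h]; trivial
  rw [← Submodule.map_span] at hm
  obtain ⟨y, hy, hxy⟩ := hm
  have hsub : m - y ∈ N := by
    have := (Submodule.Quotient.eq N).mp hxy
    simpa using neg_mem this
  exact Submodule.mem_sup.mpr ⟨y, hy, m - y, hsub, by abel⟩

/-- A finite module over `ZMod q` killed by a prime `p`, of cardinality at most `p ^ d`,
is generated by at most `d` elements. -/
private lemma elem_gen {p : ℕ} (q : ℕ) (hp : p.Prime) [NeZero q] (d : ℕ) :
    ∀ (M : Type) [AddCommGroup M] [Module (ZMod q) M] [Finite M],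
      (∀ x : M, (p : ZMod q) • x = 0) → Nat.card M ≤ p ^ d →
      ∃ s : Finset M, s.card ≤ d ∧ span (ZMod q) (s : Set M) = ⊤ := by
  induction d with
  | zero =>
    intro M _ _ _ _ hc
    classical
    rw [pow_zero] at hc
    have : Subsingleton M := Finite.card_le_one_iff_subsingleton.mp hc
    refine ⟨∅, le_rfl, eq_top_iff.mpr fun x _ => ?_⟩
    rw [Subsingleton.elim x 0]
    exact zero_mem _
  | succ d ih =>
    intro M _ _ _ hk hc
    classical
    by_cases hM : Subsingleton M
    · refine ⟨∅, by simp, eq_top_iff.mpr fun x _ => ?_⟩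
      rw [Subsingleton.elim x 0]
      exact zero_mem _
    · have : Nontrivial M := not_subsingleton_iff_nontrivial.mp hM
      obtain ⟨x, hx⟩ := exists_ne (0 : M)
      set N : Submodule (ZMod q) M := span (ZMod q) {x} with hN
      have hxo : addOrderOf x = p := by
        have h1 : addOrderOf x ∣ p := by
          apply addOrderOf_dvd_of_nsmul_eq_zero
          rw [← Nat.cast_smul_eq_nsmul (ZMod q) p x]
          exact hk x
        rcases hp.eq_one_or_self_of_dvd _ h1 with h | h
        · exact absurd (AddMonoid.addOrderOf_eq_one_iff.mp h) hx
        · exact h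
      have hset : (N : Set M) = (AddSubgroup.zmultiples x : Set M) := by
        ext y
        constructor
        · intro hy
          obtain ⟨a, rfl⟩ := Submodule.mem_span_singleton.mp hy
          refine AddSubgroup.mem_zmultiples_iff.mpr ⟨(a.val : ℤ), ?_⟩
          rw [natCast_zsmul, ← Nat.cast_smul_eq_nsmul (ZMod q), ZMod.natCast_zmod_val]
        · intro hy
          obtain ⟨k, rfl⟩ := AddSubgroup.mem_zmultiples_iff.mp hy
          refine Submodule.mem_span_singleton.mpr ⟨(k : ZMod q), ?_⟩
          rw [Int.cast_smul_eq_zsmul]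
      have hcardN : Nat.card ↥N = p := by
        have e : ↥(N : Set M) ≃ ↥(AddSubgroup.zmultiples x : Set M) := Equiv.setCongr hset
        have : Nat.card ↥N = Nat.card (AddSubgroup.zmultiples x) := Nat.card_congr e
        rw [this, Nat.card_zmultiples, hxo]
      haveI : Finite (M ⧸ N) := Finite.of_surjective _ (Submodule.mkQ_surjective N)
      have hcardQ : Nat.card (M ⧸ N) ≤ p ^ d := by
        have h1 := Submodule.card_eq_card_quotient_mul_card N
        rw [hcardN] at h1
        have h2 : p * Nat.card (M ⧸ N) ≤ p * p ^ d := by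
          rw [← h1, mul_comm p (p ^ d), ← pow_succ]; exact hc
        exact Nat.le_of_mul_le_mul_left h2 hp.pos
      have hkQ : ∀ y : M ⧸ N, (p : ZMod q) • y = 0 := by
        intro y
        obtain ⟨z, rfl⟩ := Submodule.mkQ_surjective N y
        rw [← map_smul, hk z, map_zero]
      obtain ⟨s', hs'c, hs'span⟩ := ih (M ⧸ N) hkQ hcardQ
      let g : (M ⧸ N) → M := Function.surjInv (Submodule.mkQ_surjective N)
      refine ⟨insert x (s'.image g), ?_, ?_⟩
      · calc (insert x (s'.image g)).card ≤ (s'.image g).card + 1 := Finset.card_insert_le _ _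
          _ ≤ s'.card + 1 := by gcongr; exact Finset.card_image_le
          _ ≤ d + 1 := by omega
      · have himg : N.mkQ '' (g '' ↑s') = ↑s' := by
          rw [Set.image_image]
          have : ∀ y : M ⧸ N, N.mkQ (g y) = y := fun y =>
            Function.surjInv_eq (Submodule.mkQ_surjective N) y
          simp only [this, Set.image_id']
        have h2 : span (ZMod q) ((s'.image g : Finset M) : Set M) ⊔ N = ⊤ := by
          apply span_sup_eq_top_of_quot
          rw [Finset.coe_image, himg, hs'span]
        rw [Finset.coe_insert, Submodule.span_insert]
        rw [sup_comm] at h2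
        have : (ZMod q ∙ x) = N := rfl
        rw [this, ← h2]

/-- Nakayama-type generation: a finite module over `ZMod (p^t)` whose `p`-torsion has
cardinality at most `p ^ d` is generated by at most `d` elements. -/
private lemma nakayama_gen {p : ℕ} (t : ℕ) (hp : p.Prime) (ht : 1 ≤ t)
    (M : Type) [AddCommGroup M] [Module (ZMod (p ^ t)) M] [Finite M] (d : ℕ)
    (hcard : Nat.card
      (LinearMap.ker ((p : ZMod (p ^ t)) • (LinearMap.id : M →ₗ[ZMod (p ^ t)] M))) ≤ p ^ d) :
    ∃ s : Finset M, s.card ≤ d ∧ span (ZMod (p ^ t)) (s : Set M) = ⊤ := by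
  classical
  haveI : NeZero (p ^ t) := ⟨pow_ne_zero _ hp.pos.ne'⟩
  set R := ZMod (p ^ t)
  set f : M →ₗ[R] M := (p : R) • LinearMap.id with hf
  set P : Submodule R M := LinearMap.range f with hP
  haveI : Finite (M ⧸ P) := Finite.of_surjective _ (Submodule.mkQ_surjective P)
  -- card (M ⧸ P) = card (ker f)
  have hcardQ : Nat.card (M ⧸ P) ≤ p ^ d := by
    have h1 := Submodule.card_eq_card_quotient_mul_card P
    have h2 := Submodule.card_eq_card_quotient_mul_card (LinearMap.ker f)
    have h3 : Nat.card (M ⧸ LinearMap.ker f) = Nat.card ↥P :=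
      Nat.card_congr (f.quotKerEquivRange).toEquiv
    have hPpos : 0 < Nat.card ↥P := Nat.card_pos
    have : Nat.card (M ⧸ P) * Nat.card ↥P
        = Nat.card ↥(LinearMap.ker f) * Nat.card ↥P := by
      rw [mul_comm, ← h1, h2, h3]
    have h4 : Nat.card (M ⧸ P) = Nat.card ↥(LinearMap.ker f) :=
      Nat.eq_of_mul_eq_mul_right hPpos this
    rw [h4]; exact hcard
  have hkQ : ∀ y : M ⧸ P, (p : R) • y = 0 := by
    intro y
    obtain ⟨z, rfl⟩ := Submodule.mkQ_surjective P y
    rw [← map_smul, Submodule.mkQ_apply, Submodule.Quotient.mk_eq_zero]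
    exact ⟨z, by simp [hf]⟩
  obtain ⟨s', hs'c, hs'span⟩ := elem_gen (p ^ t) hp d (M ⧸ P) hkQ hcardQ
  let g : (M ⧸ P) → M := Function.surjInv (Submodule.mkQ_surjective P)
  set s : Finset M := s'.image g with hs
  have hcards : s.card ≤ d := by
    rw [hs]; exact le_trans Finset.card_image_le hs'c
  have hsup : span R (s : Set M) ⊔ P = ⊤ := by
    apply span_sup_eq_top_of_quot
    have himg : P.mkQ '' (g '' ↑s') = ↑s' := by
      rw [Set.image_image]
      have : ∀ y : M ⧸ P, P.mkQ (g y) = y := fun y =>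
        Function.surjInv_eq (Submodule.mkQ_surjective P) y
      simp only [this, Set.image_id']
    rw [hs, Finset.coe_image, himg, hs'span]
  -- iterate: span s ⊔ range (f ^ k) = ⊤
  have hfk : ∀ (k : ℕ) (x : M), (f ^ k) x = ((p : R) ^ k) • x := by
    intro k
    induction k with
    | zero => intro x; simp
    | succ k ihk =>
      intro x
      rw [pow_succ, Module.End.mul_apply, ihk (f x)]
      have : f x = (p : R) • x := by simp [hf]
      rw [this, smul_smul, ← pow_succ]
  have hstable : ∀ (k : ℕ) (S : Submodule R M) (w : M), w ∈ S → (f ^ k) w ∈ S := by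
    intro k S w hw
    rw [hfk]
    exact Submodule.smul_mem _ _ hw
  have hiter : ∀ k : ℕ, span R (s : Set M) ⊔ LinearMap.range (f ^ (k + 1)) = ⊤ := by
    intro k
    induction k with
    | zero => rw [pow_one]; exact hsup
    | succ k ihk =>
      rw [eq_top_iff]
      intro m _
      have hm : m ∈ span R (s : Set M) ⊔ LinearMap.range (f ^ (k + 1)) := by rw [ihk]; trivial
      obtain ⟨y, hy, z, hz, rfl⟩ := Submodule.mem_sup.mp hm
      obtain ⟨z', rfl⟩ := hz
      have hz' : z' ∈ span R (s : Set M) ⊔ P := by rw [hsup]; trivial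
      obtain ⟨w, hw, u, hu, rfl⟩ := Submodule.mem_sup.mp hz'
      obtain ⟨u', rfl⟩ := hu
      have key : (f ^ (k + 1)) (f u') = (f ^ (k + 1 + 1)) u' := by
        rw [pow_succ f (k + 1), Module.End.mul_apply]
      rw [map_add, key]
      refine Submodule.mem_sup.mpr ⟨y + (f ^ (k + 1)) w, ?_, (f ^ (k + 1 + 1)) u', ⟨u', rfl⟩, by abel⟩
      exact Submodule.add_mem _ hy (hstable _ _ _ hw)
  have hzero : LinearMap.range (f ^ t) = ⊥ := by
    rw [eq_bot_iff]
    rintro m ⟨x, rfl⟩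
    have : (f ^ t) x = ((p : R) ^ t) • x := hfk t x
    rw [this]
    have hpt : ((p : R) ^ t) = 0 := by
      rw [← Nat.cast_pow, ZMod.natCast_self]
    rw [hpt, zero_smul]
    exact Submodule.zero_mem ⊥
  obtain ⟨t', rfl⟩ : ∃ t', t = t' + 1 := ⟨t - 1, (Nat.sub_add_cancel ht).symm⟩
  have := hiter t'
  rw [hzero] at this
  rw [sup_bot_eq] at this
  exact ⟨s, hcards, this⟩

end Aux


section Main

variable {p t : ℕ}

private def Jmod (p t : ℕ) : Submodule (ZMod (p ^ t)) (ZMod (p ^ t)) where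
  carrier := {a | (p : ZMod (p ^ t)) * a = 0}
  add_mem' := by
    intro a b ha hb
    simp only [Set.mem_setOf_eq] at *
    rw [mul_add, ha, hb, add_zero]
  zero_mem' := by simp
  smul_mem' := by
    intro c a ha
    simp only [Set.mem_setOf_eq, smul_eq_mul] at *
    rw [mul_left_comm, ha, mul_zero]

private lemma mem_Jmod (a : ZMod (p ^ t)) : a ∈ Jmod p t ↔ (p : ZMod (p ^ t)) * a = 0 :=
  Iff.rfl

private def socle (p t K : ℕ) : Submodule (ZMod (p ^ t)) (Fin K → ZMod (p ^ t)) :=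
  Submodule.pi Set.univ fun _ => Jmod p t

private lemma mem_socle {K : ℕ} (x : Fin K → ZMod (p ^ t)) :
    x ∈ socle p t K ↔ ∀ i, (p : ZMod (p ^ t)) * x i = 0 := by
  constructor
  · intro h i
    exact (Submodule.mem_pi.mp h) i (Set.mem_univ i)
  · intro h
    exact Submodule.mem_pi.mpr fun i _ => h i

private lemma hq_eq (hp : p.Prime) (ht : 1 ≤ t) : p ^ t = p * p ^ (t - 1) := by
  conv_lhs => rw [← Nat.sub_add_cancel ht]
  rw [pow_succ, mul_comm]

private lemma mem_Jmod_iff (hp : p.Prime) (ht : 1 ≤ t) (a : ZMod (p ^ t)) :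
    a ∈ Jmod p t ↔ p ^ (t - 1) ∣ a.val := by
  haveI : NeZero (p ^ t) := ⟨pow_ne_zero _ hp.pos.ne'⟩
  rw [mem_Jmod]
  constructor
  · intro h
    have h2 : ((p * a.val : ℕ) : ZMod (p ^ t)) = 0 := by
      rw [Nat.cast_mul, ZMod.natCast_zmod_val, h]
    rw [ZMod.natCast_eq_zero_iff] at h2
    have h4 : p * p ^ (t - 1) ∣ p * a.val := by
      conv_lhs => rw [← hq_eq hp ht]
      exact h2
    exact (mul_dvd_mul_iff_left hp.pos.ne').mp h4
  · rintro ⟨c, hc⟩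
    have h2 : (p : ℕ) * a.val = p ^ t * c := by rw [hc, hq_eq hp ht]; ring
    have h3 : ((p * a.val : ℕ) : ZMod (p ^ t)) = 0 := by
      rw [h2, Nat.cast_mul, ZMod.natCast_self, zero_mul]
    rw [Nat.cast_mul, ZMod.natCast_zmod_val] at h3
    exact h3

private lemma card_Jmod (hp : p.Prime) (ht : 1 ≤ t) : Nat.card (Jmod p t) = p := by
  haveI : NeZero (p ^ t) := ⟨pow_ne_zero _ hp.pos.ne'⟩
  have hpow : 0 < p ^ (t - 1) := pow_pos hp.pos _
  have hlt : ∀ i : Fin p, (i : ℕ) * p ^ (t - 1) < p ^ t := by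
    intro i
    rw [hq_eq hp ht]
    exact (Nat.mul_lt_mul_right hpow).mpr i.isLt
  let e : Fin p → ↥(Jmod p t) := fun i =>
    ⟨(((i : ℕ) * p ^ (t - 1) : ℕ) : ZMod (p ^ t)), by
      rw [mem_Jmod_iff hp ht, ZMod.val_natCast, Nat.mod_eq_of_lt (hlt i)]
      exact dvd_mul_left _ _⟩
  have hbij : Function.Bijective e := by
    constructor
    · intro i j hij
      have h1 := congrArg (fun z : ↥(Jmod p t) => ZMod.val (z : ZMod (p ^ t))) hij
      simp only [e, ZMod.val_natCast] at h1
      rw [Nat.mod_eq_of_lt (hlt i), Nat.mod_eq_of_lt (hlt j)] at h1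
      exact Fin.ext (Nat.eq_of_mul_eq_mul_right hpow h1)
    · rintro ⟨a, ha⟩
      have hdvd := (mem_Jmod_iff hp ht a).mp ha
      have hvlt : a.val < p ^ t := ZMod.val_lt a
      have hilt : a.val / p ^ (t - 1) < p := by
        rw [Nat.div_lt_iff_lt_mul hpow, ← hq_eq hp ht]
        exact hvlt
      refine ⟨⟨a.val / p ^ (t - 1), hilt⟩, ?_⟩
      apply Subtype.ext
      show (((a.val / p ^ (t - 1)) * p ^ (t - 1) : ℕ) : ZMod (p ^ t)) = a
      rw [Nat.div_mul_cancel hdvd, ZMod.natCast_zmod_val]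
  have := Nat.card_eq_of_bijective e hbij
  rw [← this, Nat.card_eq_fintype_card, Fintype.card_fin]

private lemma card_socle (hp : p.Prime) (ht : 1 ≤ t) (K : ℕ) :
    Nat.card (socle p t K) = p ^ K := by
  haveI : NeZero (p ^ t) := ⟨pow_ne_zero _ hp.pos.ne'⟩
  let e : ↥(socle p t K) ≃ (Fin K → ↥(Jmod p t)) :=
    { toFun := fun x i => ⟨x.1 i, (Submodule.mem_pi.mp x.2) i (Set.mem_univ i)⟩
      invFun := fun f => ⟨fun i => f i, Submodule.mem_pi.mpr fun i _ => (f i).2⟩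
      left_inv := fun x => rfl
      right_inv := fun f => rfl }
  rw [Nat.card_congr e, Nat.card_fun, card_Jmod hp ht, Nat.card_eq_fintype_card,
    Fintype.card_fin]

private lemma leeWt_lower (hp : p.Prime) (ht : 1 ≤ t) {a : ZMod (p ^ t)}
    (ha : a ∈ Jmod p t) (h0 : a ≠ 0) : p ^ (t - 1) ≤ leeWt a := by
  haveI : NeZero (p ^ t) := ⟨pow_ne_zero _ hp.pos.ne'⟩
  have hdvd := (mem_Jmod_iff hp ht a).mp ha
  have hvpos : 0 < a.val := by
    rcases Nat.eq_zero_or_pos a.val with h | h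
    · exact absurd (by rw [← ZMod.natCast_zmod_val a, h, Nat.cast_zero]) h0
    · exact h
  have h1 : p ^ (t - 1) ≤ a.val := Nat.le_of_dvd hvpos hdvd
  have hvlt : a.val < p ^ t := ZMod.val_lt a
  have hdvd2 : p ^ (t - 1) ∣ p ^ t - a.val :=
    Nat.dvd_sub (pow_dvd_pow p (by omega)) hdvd
  have h2 : p ^ (t - 1) ≤ p ^ t - a.val := Nat.le_of_dvd (by omega) hdvd2
  exact le_min h1 h2

private lemma val_c (hp : p.Prime) (ht : 1 ≤ t) :
    (((p ^ (t - 1) : ℕ) : ZMod (p ^ t))).val = p ^ (t - 1) := by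
  haveI : NeZero (p ^ t) := ⟨pow_ne_zero _ hp.pos.ne'⟩
  rw [ZMod.val_natCast, Nat.mod_eq_of_lt]
  exact Nat.pow_lt_pow_right hp.one_lt (by omega)

private lemma c_ne_zero (hp : p.Prime) (ht : 1 ≤ t) :
    ((p ^ (t - 1) : ℕ) : ZMod (p ^ t)) ≠ 0 := by
  haveI : NeZero (p ^ t) := ⟨pow_ne_zero _ hp.pos.ne'⟩
  intro h
  have hv := val_c hp ht
  rw [h, ZMod.val_zero] at hv
  exact (pow_pos hp.pos (t - 1)).ne' hv.symm

private lemma c_mem_Jmod (hp : p.Prime) (ht : 1 ≤ t) :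
    ((p ^ (t - 1) : ℕ) : ZMod (p ^ t)) ∈ Jmod p t := by
  rw [mem_Jmod_iff hp ht, val_c hp ht]

private lemma leeWt_c (hp : p.Prime) (ht : 1 ≤ t) :
    leeWt (((p ^ (t - 1) : ℕ) : ZMod (p ^ t))) = p ^ (t - 1) := by
  rw [leeWt, val_c hp ht]
  have h2 : p ^ (t - 1) * 2 ≤ p ^ t := by
    rw [hq_eq hp ht, mul_comm p (p ^ (t - 1))]
    exact Nat.mul_le_mul_left _ hp.two_le
  exact min_eq_left (by omega)

private lemma single_mem_socle (hp : p.Prime) (ht : 1 ≤ t) (K : ℕ) (i : Fin K) :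
    Pi.single i ((p ^ (t - 1) : ℕ) : ZMod (p ^ t)) ∈ socle p t K := by
  classical
  rw [mem_socle]
  intro j
  rcases eq_or_ne j i with rfl | hne
  · rw [Pi.single_eq_same]
    exact (mem_Jmod _).mp (c_mem_Jmod hp ht)
  · rw [Pi.single_eq_of_ne hne, mul_zero]

private lemma single_ne_zero' (hp : p.Prime) (ht : 1 ≤ t) {K : ℕ} (i : Fin K) :
    (Pi.single i ((p ^ (t - 1) : ℕ) : ZMod (p ^ t)) : Fin K → ZMod (p ^ t)) ≠ 0 := by
  intro h
  have h1 := congrFun h i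
  rw [Pi.single_eq_same] at h1
  exact c_ne_zero hp ht h1

private lemma leeWt_zero (hp : p.Prime) (ht : 1 ≤ t) :
    leeWt (0 : ZMod (p ^ t)) = 0 := by
  haveI : NeZero (p ^ t) := ⟨pow_ne_zero _ hp.pos.ne'⟩
  rw [leeWt, ZMod.val_zero]
  exact Nat.min_eq_left (Nat.zero_le _)

private lemma leeWtVec_single (hp : p.Prime) (ht : 1 ≤ t) {K : ℕ} (i : Fin K) :
    leeWtVec (Pi.single i ((p ^ (t - 1) : ℕ) : ZMod (p ^ t))) = p ^ (t - 1) := by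
  classical
  rw [leeWtVec, Fintype.sum_eq_single i]
  · rw [Pi.single_eq_same]
    exact leeWt_c hp ht
  · intro j hj
    rw [Pi.single_eq_of_ne hj]
    exact leeWt_zero hp ht

private lemma minLee_socle (hp : p.Prime) (ht : 1 ≤ t) {K : ℕ} (hK : 1 ≤ K) :
    minLee (socle p t K) = p ^ (t - 1) := by
  have hmem : p ^ (t - 1) ∈ {w | ∃ x ∈ socle p t K, x ≠ 0 ∧ leeWtVec x = w} :=
    ⟨Pi.single (⟨0, hK⟩ : Fin K) ((p ^ (t - 1) : ℕ) : ZMod (p ^ t)),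
      single_mem_socle hp ht K _, single_ne_zero' hp ht _, leeWtVec_single hp ht _⟩
  apply le_antisymm
  · exact Nat.sInf_le hmem
  · apply le_csInf ⟨_, hmem⟩
    rintro w ⟨x, hxS, hx0, rfl⟩
    obtain ⟨i, hi⟩ := Function.ne_iff.mp hx0
    have hxi : x i ∈ Jmod p t := (mem_Jmod _).mpr ((mem_socle x).mp hxS i)
    calc p ^ (t - 1) ≤ leeWt (x i) := leeWt_lower hp ht hxi hi
      _ ≤ leeWtVec x := by
        rw [leeWtVec]
        exact Finset.single_le_sum (f := fun j => leeWt (x j)) (fun j _ => Nat.zero_le _)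
          (Finset.mem_univ i)

private lemma span_singles (hp : p.Prime) (ht : 1 ≤ t) (K : ℕ) :
    span (ZMod (p ^ t))
      ((Finset.image (fun i => Pi.single i ((p ^ (t - 1) : ℕ) : ZMod (p ^ t))) Finset.univ :
        Finset (Fin K → ZMod (p ^ t))) : Set (Fin K → ZMod (p ^ t))) = socle p t K := by
  classical
  haveI : NeZero (p ^ t) := ⟨pow_ne_zero _ hp.pos.ne'⟩
  apply le_antisymm
  · rw [Submodule.span_le]
    intro y hy
    simp only [Finset.coe_image, Finset.coe_univ, Set.image_univ, Set.mem_range] at hy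
    obtain ⟨i, rfl⟩ := hy
    exact single_mem_socle hp ht K i
  · intro x hx
    have hxsum : x = ∑ i, Pi.single i (x i) := (Finset.univ_sum_single x).symm
    rw [hxsum]
    apply Submodule.sum_mem
    intro i _
    have hdvd : p ^ (t - 1) ∣ (x i).val :=
      (mem_Jmod_iff hp ht _).mp ((mem_Jmod _).mpr ((mem_socle x).mp hx i))
    obtain ⟨r, hr⟩ := hdvd
    have hxi : x i = ((r : ℕ) : ZMod (p ^ t)) • ((p ^ (t - 1) : ℕ) : ZMod (p ^ t)) := by
      rw [smul_eq_mul, ← Nat.cast_mul, mul_comm, ← hr, ZMod.natCast_zmod_val]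
    rw [hxi, Pi.single_smul]
    apply Submodule.smul_mem
    apply Submodule.subset_span
    simp only [Finset.coe_image, Finset.coe_univ, Set.image_univ]
    exact Set.mem_range_self i

private lemma card_image_singles (hp : p.Prime) (ht : 1 ≤ t) (K : ℕ) :
    (Finset.image (fun i => Pi.single i ((p ^ (t - 1) : ℕ) : ZMod (p ^ t))) (Finset.univ :
      Finset (Fin K))).card = K := by
  classical
  have hinj : Function.Injective
      (fun i => (Pi.single i ((p ^ (t - 1) : ℕ) : ZMod (p ^ t)) : Fin K → ZMod (p ^ t))) := by
    intro i j hij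
    by_contra hne
    have h1 := congrFun hij i
    simp only [Pi.single_eq_same, Pi.single_eq_of_ne hne] at h1
    exact c_ne_zero hp ht h1
  rw [Finset.card_image_of_injective _ hinj, Finset.card_univ, Fintype.card_fin]

private lemma card_le_of_span_socle (hp : p.Prime) (ht : 1 ≤ t) {K : ℕ}
    {s : Finset (Fin K → ZMod (p ^ t))}
    (hspan : span (ZMod (p ^ t)) (s : Set (Fin K → ZMod (p ^ t))) = socle p t K) :
    K ≤ s.card := by
  classical
  haveI : NeZero (p ^ t) := ⟨pow_ne_zero _ hp.pos.ne'⟩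
  have hps : ∀ y ∈ s, ∀ k : ℕ, (p * k) • y = (0 : Fin K → ZMod (p ^ t)) := by
    intro y hy k
    have hyS : y ∈ socle p t K := hspan ▸ Submodule.subset_span hy
    have h0 : (p : ZMod (p ^ t)) • y = 0 := by
      funext i
      simp only [Pi.smul_apply, smul_eq_mul, Pi.zero_apply]
      exact (mem_socle y).mp hyS i
    calc (p * k) • y = k • ((p : ℕ) • y) := by rw [mul_comm, mul_smul]
      _ = k • ((p : ZMod (p ^ t)) • y) := by rw [Nat.cast_smul_eq_nsmul]
      _ = 0 := by rw [h0, smul_zero]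
  let F : ({ y // y ∈ s } → Fin p) → (Fin K → ZMod (p ^ t)) :=
    fun f => ∑ y ∈ s.attach, ((f y : ℕ)) • (y : Fin K → ZMod (p ^ t))
  have hsub : ((socle p t K : Submodule (ZMod (p ^ t)) (Fin K → ZMod (p ^ t))) :
      Set (Fin K → ZMod (p ^ t))) ⊆ Set.range F := by
    intro x hx
    rw [SetLike.mem_coe, ← hspan] at hx
    obtain ⟨g, hg⟩ := mem_span_finset.mp hx
    refine ⟨fun y => ⟨(g y).val % p, Nat.mod_lt _ hp.pos⟩, ?_⟩
    have hterm : ∀ y ∈ s.attach,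
        (((g (y : Fin K → ZMod (p ^ t))).val % p) : ℕ) • (y : Fin K → ZMod (p ^ t))
          = g (y : Fin K → ZMod (p ^ t)) • (y : Fin K → ZMod (p ^ t)) := by
      intro y _
      set v := (y : Fin K → ZMod (p ^ t))
      have hmod := Nat.div_add_mod ((g v).val) p
      calc ((g v).val % p) • v
          = ((p * ((g v).val / p)) • v) + (((g v).val % p) • v) := by
            rw [hps _ y.2 _, zero_add]
        _ = (g v).val • v := by rw [← add_smul, hmod]
        _ = g v • v := by rw [← Nat.cast_smul_eq_nsmul (ZMod (p ^ t)), ZMod.natCast_zmod_val]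
    calc F (fun y => ⟨(g y).val % p, Nat.mod_lt _ hp.pos⟩)
        = ∑ y ∈ s.attach, g (y : Fin K → ZMod (p ^ t)) • (y : Fin K → ZMod (p ^ t)) :=
          Finset.sum_congr rfl hterm
      _ = ∑ y ∈ s, g y • y := Finset.sum_attach s (fun v => g v • v)
      _ = x := hg.2
  have h1 : Nat.card ↥((socle p t K : Submodule (ZMod (p ^ t)) (Fin K → ZMod (p ^ t))) :
      Set (Fin K → ZMod (p ^ t))) ≤ Nat.card ↥(Set.range F) :=
    Nat.card_mono (Set.toFinite _) hsub
  have h2 : Nat.card ↥(Set.range F) ≤ Nat.card ({ y // y ∈ s } → Fin p) :=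
    Nat.card_le_card_of_surjective _ Set.rangeFactorization_surjective
  have h3 : Nat.card ({ y // y ∈ s } → Fin p) = p ^ s.card := by
    rw [Nat.card_fun, Nat.card_eq_fintype_card, Fintype.card_fin, Nat.card_eq_fintype_card,
      Fintype.card_coe]
  have h4 : Nat.card ↥((socle p t K : Submodule (ZMod (p ^ t)) (Fin K → ZMod (p ^ t))) :
      Set (Fin K → ZMod (p ^ t))) = p ^ K := card_socle hp ht K
  have hfin : p ^ K ≤ p ^ s.card := by
    rw [← h4, ← h3]
    exact h1.trans h2
  exact (Nat.pow_le_pow_iff_right hp.one_lt).mp hfin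

private lemma codeRank_socle (hp : p.Prime) (ht : 1 ≤ t) {K : ℕ} (hK : 1 ≤ K) :
    codeRank (socle p t K) = K := by
  classical
  have hwit : K ∈ {m | ∃ s : Finset (Fin K → ZMod (p ^ t)), s.card = m ∧
      span (ZMod (p ^ t)) (↑s : Set (Fin K → ZMod (p ^ t))) = socle p t K} :=
    ⟨Finset.image (fun i => Pi.single i ((p ^ (t - 1) : ℕ) : ZMod (p ^ t))) Finset.univ,
      card_image_singles hp ht K, span_singles hp ht K⟩
  apply le_antisymm
  · exact Nat.sInf_le hwit
  · obtain ⟨s, hcard, hspan⟩ := Nat.sInf_mem (⟨K, hwit⟩ : Set.Nonempty _)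
    rw [codeRank, ← hcard]
    exact card_le_of_span_socle hp ht hspan

private lemma single_mem_of_codeRank (hp : p.Prime) (ht : 1 ≤ t) {K : ℕ} (hK : 1 ≤ K)
    (C : Submodule (ZMod (p ^ t)) (Fin K → ZMod (p ^ t))) (hC : codeRank C = K) :
    Pi.single (⟨0, hK⟩ : Fin K) ((p ^ (t - 1) : ℕ) : ZMod (p ^ t)) ∈ C := by
  classical
  haveI : NeZero (p ^ t) := ⟨pow_ne_zero _ hp.pos.ne'⟩
  by_contra hx
  have hssubset : ((C ⊓ socle p t K :
      Submodule (ZMod (p ^ t)) (Fin K → ZMod (p ^ t))) : Set (Fin K → ZMod (p ^ t)))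
      ⊂ ((socle p t K : Submodule (ZMod (p ^ t)) (Fin K → ZMod (p ^ t))) :
        Set (Fin K → ZMod (p ^ t))) := by
    rw [Set.ssubset_def]
    constructor
    · intro z hz
      exact hz.2
    · intro hsup
      exact hx (hsup (single_mem_socle hp ht K ⟨0, hK⟩)).1
  have hlt : Nat.card ↥(C ⊓ socle p t K) < p ^ K := by
    have h1 : Nat.card ↥((C ⊓ socle p t K :
          Submodule (ZMod (p ^ t)) (Fin K → ZMod (p ^ t))) : Set (Fin K → ZMod (p ^ t)))
        < Nat.card ↥((socle p t K : Submodule (ZMod (p ^ t)) (Fin K → ZMod (p ^ t))) :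
          Set (Fin K → ZMod (p ^ t))) := by
      rw [Nat.card_coe_set_eq, Nat.card_coe_set_eq]
      exact Set.ncard_lt_ncard hssubset (Set.toFinite _)
    have h2 : Nat.card ↥((socle p t K : Submodule (ZMod (p ^ t)) (Fin K → ZMod (p ^ t))) :
        Set (Fin K → ZMod (p ^ t))) = p ^ K := card_socle hp ht K
    rw [h2] at h1
    exact h1
  have hdvd : Nat.card ↥(C ⊓ socle p t K) ∣ p ^ K := by
    have e := Submodule.comapSubtypeEquivOfLe
      (inf_le_right : C ⊓ socle p t K ≤ socle p t K)
    rw [← card_socle hp ht K, ← Nat.card_congr e.toEquiv]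
    exact AddSubgroup.card_addSubgroup_dvd_card
      ((Submodule.comap (socle p t K).subtype (C ⊓ socle p t K)).toAddSubgroup)
  have hle : Nat.card ↥(C ⊓ socle p t K) ≤ p ^ (K - 1) := by
    obtain ⟨j, hjle, hj⟩ := (Nat.dvd_prime_pow hp).mp hdvd
    have hjK : j ≠ K := by
      rintro rfl
      rw [hj] at hlt
      exact lt_irrefl _ hlt
    rw [hj]
    exact Nat.pow_le_pow_right hp.pos (by omega)
  have hkereq : LinearMap.ker ((p : ZMod (p ^ t)) •
      (LinearMap.id : ↥C →ₗ[ZMod (p ^ t)] ↥C))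
      = Submodule.comap C.subtype (socle p t K) := by
    ext z
    simp only [LinearMap.mem_ker, LinearMap.smul_apply, LinearMap.id_apply,
      Submodule.mem_comap, Submodule.coe_subtype]
    constructor
    · intro hz
      rw [mem_socle]
      intro i
      have h2 : (p : ZMod (p ^ t)) • (z : Fin K → ZMod (p ^ t)) = 0 :=
        congrArg Subtype.val hz
      simpa [smul_eq_mul] using congrFun h2 i
    · intro hz
      apply Subtype.ext
      show (p : ZMod (p ^ t)) • (z : Fin K → ZMod (p ^ t)) = 0
      funext i
      simpa [smul_eq_mul] using (mem_socle _).mp hz i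
  have hcomap : Submodule.comap C.subtype (socle p t K)
      = Submodule.comap C.subtype (C ⊓ socle p t K) := by
    ext z
    simp only [Submodule.mem_comap, Submodule.mem_inf, Submodule.coe_subtype]
    exact ⟨fun h => ⟨z.2, h⟩, fun h => h.2⟩
  have hker : Nat.card ↥(LinearMap.ker ((p : ZMod (p ^ t)) •
      (LinearMap.id : ↥C →ₗ[ZMod (p ^ t)] ↥C))) ≤ p ^ (K - 1) := by
    rw [hkereq, hcomap,
      Nat.card_congr (Submodule.comapSubtypeEquivOfLe
        (inf_le_left : C ⊓ socle p t K ≤ C)).toEquiv]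
    exact hle
  obtain ⟨s, hsc, hsspan⟩ := nakayama_gen t hp ht (↥C) (K - 1) hker
  have hspanC : span (ZMod (p ^ t))
      ((s.image (Subtype.val) : Finset (Fin K → ZMod (p ^ t))) :
        Set (Fin K → ZMod (p ^ t))) = C := by
    rw [Finset.coe_image]
    have himg : (Subtype.val '' (↑s : Set ↥C)) = (C.subtype '' ↑s) := rfl
    rw [himg, ← Submodule.map_span, hsspan, Submodule.map_top, Submodule.range_subtype]
  have hrank : codeRank C ≤ K - 1 := by
    have h1 : codeRank C ≤ (s.image Subtype.val).card :=
      Nat.sInf_le ⟨s.image Subtype.val, rfl, hspanC⟩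
    exact h1.trans (le_trans Finset.card_image_le hsc)
  omega

end Main

theorem phiR_K_K_eq (p t K : ℕ) (hp : p.Prime) (ht : 1 ≤ t) (hK : 1 ≤ K) :
    PhiR K K (p ^ t) = p ^ (t - 1) := by
  have hub : ∀ d ∈ {d | ∃ C : Submodule (ZMod (p ^ t)) (Fin K → ZMod (p ^ t)),
      codeRank C = K ∧ minLee C = d}, d ≤ p ^ (t - 1) := by
    rintro d ⟨C, hC, rfl⟩
    exact Nat.sInf_le ⟨Pi.single (⟨0, hK⟩ : Fin K) ((p ^ (t - 1) : ℕ) : ZMod (p ^ t)),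
      single_mem_of_codeRank hp ht hK C hC, single_ne_zero' hp ht _,
      leeWtVec_single hp ht _⟩
  have hmem : p ^ (t - 1) ∈ {d | ∃ C : Submodule (ZMod (p ^ t)) (Fin K → ZMod (p ^ t)),
      codeRank C = K ∧ minLee C = d} :=
    ⟨socle p t K, codeRank_socle hp ht hK, minLee_socle hp ht hK⟩
  apply le_antisymm
  · exact csSup_le ⟨_, hmem⟩ hub
  · exact le_csSup ⟨p ^ (t - 1), hub⟩ hmem
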